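/- Let α(I) = I²·sinh(π(I−1)/2)/((I−1)²·sinh(πI/2)) (with α(0) = 0 by continuous extension) and let μ ≠ 0 be a real number. Then there exists a unique I_c ∈ (0,1) such that |α(I_c)| = 1/|μ|; moreover |α(I)| < 1/|μ| for all I ∈ (0, I_c) and |α(I)| > 1/|μ| for all I ∈ (I_c, 1). -/

import Mathlib

open Real

/-- `α(I) = I² sinh(π(I-1)/2) / ((I-1)² sinh(πI/2))` (with `α(0) = 0` by Lean's
division convention, matching the continuous extension). -/
noncomputable def alphaFn (I : ℝ) : ℝ :=
  I ^ 2 * Real.sinh (π * (I - 1) / 2) / ((I - 1) ^ 2 * Real.sinh (π * I / 2))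

/-- Auxiliary function `h(x) = x² / sinh (πx/2)`. -/
noncomputable def hFn (x : ℝ) : ℝ := x ^ 2 / Real.sinh (π * x / 2)

lemma sinh_arg_pos {x : ℝ} (hx : 0 < x) : 0 < Real.sinh (π * x / 2) := by
  rw [Real.sinh_pos_iff]; positivity

lemma hFn_pos {x : ℝ} (hx : 0 < x) : 0 < hFn x :=
  div_pos (by positivity) (sinh_arg_pos hx)

/-- The key inequality: `u cosh u < 2 sinh u` for `0 < u ≤ π/2`. -/
lemma key_ineq {u : ℝ} (hu : 0 < u) (hu2 : u ≤ π / 2) :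
    u * Real.cosh u < 2 * Real.sinh u := by
  have hu158 : u ≤ 1.58 := by nlinarith [Real.pi_lt_d2]
  set A := Real.exp u with hAdef
  set B := Real.exp (-u) with hBdef
  have hA : (0 : ℝ) < A := Real.exp_pos u
  have hB : (0 : ℝ) < B := Real.exp_pos _
  have hAB : A * B = 1 := by
    rw [hAdef, hBdef, ← Real.exp_add]; simp
  have hexp : (1 + u / 2) ^ 2 ≤ A := by
    have h1 : (1 : ℝ) + u / 2 ≤ Real.exp (u / 2) := by
      have := Real.add_one_le_exp (u / 2); linarith
    have h2 : Real.exp (u / 2) ^ 2 = A := by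
      rw [hAdef, sq, ← Real.exp_add]; ring_nf
    calc (1 + u / 2) ^ 2 ≤ Real.exp (u / 2) ^ 2 :=
          pow_le_pow_left₀ (by positivity) h1 2
      _ = A := h2
  have hA2 : (1 + u / 2) ^ 4 ≤ A ^ 2 := by
    have := pow_le_pow_left₀ (by positivity : (0:ℝ) ≤ (1 + u / 2) ^ 2) hexp 2
    calc (1 + u / 2) ^ 4 = ((1 + u / 2) ^ 2) ^ 2 := by ring
      _ ≤ A ^ 2 := this
  have hpoly : (2 + u) < (1 + u / 2) ^ 4 * (2 - u) := by
    nlinarith [sq_nonneg u, sq_nonneg (u - 1), mul_pos hu hu,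
      mul_nonneg (mul_nonneg hu.le hu.le) hu.le, sq_nonneg (u - 1.58),
      mul_nonneg (mul_nonneg hu.le hu.le) (sub_nonneg.2 hu158)]
  have hmain : (2 + u) < A ^ 2 * (2 - u) := by
    calc (2 + u) < (1 + u / 2) ^ 4 * (2 - u) := hpoly
      _ ≤ A ^ 2 * (2 - u) := by
          apply mul_le_mul_of_nonneg_right hA2 (by linarith)
  rw [Real.cosh_eq, Real.sinh_eq]
  rw [← hAdef, ← hBdef]
  nlinarith [mul_pos hA hA, mul_pos hA hB, hmain, hAB, hA, hB]

/-- `hFn` is strictly monotone on `(0, 1]`. -/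
lemma hFn_strictMonoOn : StrictMonoOn hFn (Set.Ioc 0 1) := by
  have hderiv : ∀ x ∈ Set.Ioo (0:ℝ) 1, HasDerivAt hFn
      ((2 * x * Real.sinh (π * x / 2) - x ^ 2 * (Real.cosh (π * x / 2) * (π / 2))) /
        (Real.sinh (π * x / 2)) ^ 2) x := by
    intro x hx
    have h1 : HasDerivAt (fun y : ℝ => y ^ 2) (2 * x) x := by
      simpa using (hasDerivAt_pow 2 x)
    have hin : HasDerivAt (fun y : ℝ => π * y / 2) (π / 2) x := by
      simpa using ((hasDerivAt_id x).const_mul π).div_const 2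
    have h2 : HasDerivAt (fun y : ℝ => Real.sinh (π * y / 2))
        (Real.cosh (π * x / 2) * (π / 2)) x := by
      have := (Real.hasDerivAt_sinh (π * x / 2)).comp x hin
      exact this
    exact h1.div h2 (sinh_arg_pos hx.1).ne'
  apply strictMonoOn_of_deriv_pos (convex_Ioc 0 1)
  · intro x hx
    have hx0 : 0 < x := hx.1
    refine ContinuousAt.continuousWithinAt ?_
    unfold hFn
    exact ContinuousAt.div (by fun_prop) (by fun_prop) (sinh_arg_pos hx0).ne'
  · intro x hx
    rw [interior_Ioc] at hx
    rw [(hderiv x hx).deriv]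
    have hx0 := hx.1
    have hu : 0 < π * x / 2 := by positivity
    have hu2 : π * x / 2 ≤ π / 2 := by
      have := Real.pi_pos
      nlinarith [hx.2]
    have hkey := key_ineq hu hu2
    have hS := sinh_arg_pos hx0
    apply div_pos _ (by positivity)
    nlinarith [hkey, hx0, mul_pos hx0 hS]

/-- On `(0,1)`, `|α(I)| = hFn I / hFn (1 - I)`. -/
lemma abs_alphaFn_eq {I : ℝ} (hI : I ∈ Set.Ioo (0:ℝ) 1) :
    |alphaFn I| = hFn I / hFn (1 - I) := by
  obtain ⟨h0, h1⟩ := hI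
  have h1I : 0 < 1 - I := by linarith
  have hS1 : 0 < Real.sinh (π * I / 2) := sinh_arg_pos h0
  have hS2 : 0 < Real.sinh (π * (1 - I) / 2) := sinh_arg_pos h1I
  have hneg : Real.sinh (π * (I - 1) / 2) = - Real.sinh (π * (1 - I) / 2) := by
    rw [← Real.sinh_neg]; ring_nf
  have halpha : alphaFn I = - (hFn I / hFn (1 - I)) := by
    rw [alphaFn, hFn, hFn, hneg]
    have hsq : (I - 1) ^ 2 = (1 - I) ^ 2 := by ring
    rw [hsq]
    field_simp
  rw [halpha, abs_neg, abs_of_pos (div_pos (hFn_pos h0) (hFn_pos h1I))]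

/-- `F I = hFn I / hFn (1-I)` is strictly increasing across `(0,1)`. -/
lemma F_lt_F {I J : ℝ} (hI : I ∈ Set.Ioo (0:ℝ) 1) (hJ : J ∈ Set.Ioo (0:ℝ) 1)
    (hIJ : I < J) : hFn I / hFn (1 - I) < hFn J / hFn (1 - J) := by
  have h1 : hFn I < hFn J :=
    hFn_strictMonoOn ⟨hI.1, hI.2.le⟩ ⟨hJ.1, hJ.2.le⟩ hIJ
  have h2 : hFn (1 - J) < hFn (1 - I) :=
    hFn_strictMonoOn ⟨by linarith [hJ.2], by linarith [hJ.1]⟩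
      ⟨by linarith [hI.2], by linarith [hI.1]⟩ (by linarith)
  have hpI : 0 < hFn I := hFn_pos hI.1
  have hp1J : 0 < hFn (1 - J) := hFn_pos (by linarith [hJ.2])
  have hp1I : 0 < hFn (1 - I) := hFn_pos (by linarith [hI.2])
  exact div_lt_div₀ h1 h2.le (hFn_pos hJ.1).le hp1J

/-- Bifurcation value in `(0,1)`: for any `μ ≠ 0` there is a unique `I_c ∈ (0,1)`
with `|α(I_c)| = 1/|μ|`; `|α| < 1/|μ|` on `(0, I_c)` and `|α| > 1/|μ|` on `(I_c, 1)`. -/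
theorem alphaFn_bifurcation_Ioo (μ : ℝ) (hμ : μ ≠ 0) :
    ∃ Ic : ℝ, Ic ∈ Set.Ioo (0 : ℝ) 1 ∧ |alphaFn Ic| = 1 / |μ| ∧
      (∀ I ∈ Set.Ioo (0 : ℝ) 1, |alphaFn I| = 1 / |μ| → I = Ic) ∧
      (∀ I ∈ Set.Ioo (0 : ℝ) Ic, |alphaFn I| < 1 / |μ|) ∧
      (∀ I ∈ Set.Ioo Ic 1, 1 / |μ| < |alphaFn I|) := by
  have hπ : (0:ℝ) < π := Real.pi_pos
  set c : ℝ := 1 / |μ| with hc_def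
  have hc : 0 < c := div_pos one_pos (abs_pos.2 hμ)
  set F : ℝ → ℝ := fun I => hFn I / hFn (1 - I) with hF_def
  set H : ℝ := hFn (1/2) with hH_def
  have hH : 0 < H := hFn_pos (by norm_num)
  have hmono := hFn_strictMonoOn.monotoneOn
  -- a bound on hFn near 0
  have hFn_small : ∀ x : ℝ, 0 < x → hFn x ≤ 2 * x / π := by
    intro x hx
    have hs : π * x / 2 < Real.sinh (π * x / 2) :=
      (Real.self_lt_sinh_iff).2 (by positivity)
    have h0 : (0:ℝ) < π * x / 2 := by positivity
    calc hFn x = x ^ 2 / Real.sinh (π * x / 2) := rfl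
      _ ≤ x ^ 2 / (π * x / 2) := by
          apply div_le_div_of_nonneg_left (by positivity) h0 hs.le
      _ = 2 * x / π := by field_simp
  -- choose a
  set a : ℝ := min (1/2) (c * H * π / 4) with ha_def
  have ha0 : 0 < a := lt_min (by norm_num) (by positivity)
  have ha_half : a ≤ 1/2 := min_le_left _ _
  have ha1 : a < 1 := lt_of_le_of_lt ha_half (by norm_num)
  have hFa : F a < c := by
    have h1 : hFn a ≤ 2 * a / π := hFn_small a ha0
    have h2 : H ≤ hFn (1 - a) :=
      hmono (by constructor <;> norm_num) ⟨by linarith, by linarith⟩ (by linarith)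
    have h3 : F a ≤ (2 * a / π) / H := by
      apply div_le_div₀ (by positivity) h1 hH h2
    have h4 : 2 * a / π ≤ c * H / 2 := by
      rw [div_le_iff₀ hπ]
      have : a ≤ c * H * π / 4 := min_le_right _ _
      nlinarith
    have h5 : (2 * a / π) / H ≤ (c * H / 2) / H := by gcongr
    have h6 : (c * H / 2) / H = c / 2 := by field_simp
    calc F a ≤ (2 * a / π) / H := h3
      _ ≤ (c * H / 2) / H := h5
      _ = c / 2 := h6
      _ < c := by linarith
  -- choose b
  set δ : ℝ := min (min ((1 - a)/2) (1/4)) (π * H / (4 * c)) with hδ_def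
  have hδ0 : 0 < δ := by
    apply lt_min (lt_min (by linarith) (by norm_num)) (by positivity)
  have hδa : δ ≤ (1 - a)/2 := le_trans (min_le_left _ _) (min_le_left _ _)
  have hδ4 : δ ≤ 1/4 := le_trans (min_le_left _ _) (min_le_right _ _)
  have hδc : δ ≤ π * H / (4 * c) := min_le_right _ _
  set b : ℝ := 1 - δ with hb_def
  have hb1 : b < 1 := by simp only [hb_def]; linarith
  have hab : a < b := by simp only [hb_def]; linarith
  have hb_half : (1:ℝ)/2 ≤ b := by simp only [hb_def]; linarith
  have hb0 : 0 < b := by linarith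
  have hFb : 2 * c ≤ F b := by
    have h1 : H ≤ hFn b :=
      hmono (by constructor <;> norm_num) ⟨hb0, hb1.le⟩ hb_half
    have h2 : hFn (1 - b) ≤ H / (2 * c) := by
      have h2a : hFn (1 - b) ≤ 2 * δ / π := by
        have : (1:ℝ) - b = δ := by simp [hb_def]
        rw [this]; exact hFn_small δ hδ0
      have h2b : 2 * δ / π ≤ H / (2 * c) := by
        rw [div_le_div_iff₀ hπ (by positivity)]
        have hx := (le_div_iff₀ (by positivity : (0:ℝ) < 4 * c)).mp hδc
        nlinarith [hx]
      linarith
    have h3 : H / (H / (2 * c)) ≤ hFn b / hFn (1 - b) := by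
      have hd0 : 0 < hFn (1 - b) := hFn_pos (by linarith)
      apply div_le_div₀ (hFn_pos hb0).le h1 hd0 h2
    have h4 : H / (H / (2 * c)) = 2 * c := by
      field_simp
    calc 2 * c = H / (H / (2 * c)) := h4.symm
      _ ≤ F b := h3
  -- continuity of F on [a, b]
  have hcontFn : ∀ x : ℝ, 0 < x → ContinuousAt hFn x := by
    intro x hx
    unfold hFn
    exact ContinuousAt.div (by fun_prop) (by fun_prop) (sinh_arg_pos hx).ne'
  have hFcont : ContinuousOn F (Set.Icc a b) := by
    intro x hx
    have hx0 : 0 < x := lt_of_lt_of_le ha0 hx.1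
    have hx1 : x < 1 := lt_of_le_of_lt hx.2 hb1
    refine ContinuousAt.continuousWithinAt ?_
    apply ContinuousAt.div (hcontFn x hx0)
    · exact (hcontFn (1 - x) (by linarith)).comp
        ((continuous_const.sub continuous_id).continuousAt)
    · exact (hFn_pos (by linarith : (0:ℝ) < 1 - x)).ne'
  -- IVT
  have hc_mem : c ∈ Set.Ioo (F a) (F b) := ⟨hFa, by linarith⟩
  obtain ⟨Ic, hIc_mem, hFIc⟩ := intermediate_value_Ioo hab.le hFcont hc_mem
  have hIc01 : Ic ∈ Set.Ioo (0:ℝ) 1 :=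
    ⟨lt_trans ha0 hIc_mem.1, lt_trans hIc_mem.2 hb1⟩
  have habs : ∀ I ∈ Set.Ioo (0:ℝ) 1, |alphaFn I| = F I := fun I hI => abs_alphaFn_eq hI
  refine ⟨Ic, hIc01, ?_, ?_, ?_, ?_⟩
  · rw [habs Ic hIc01, hFIc]
  · intro I hI hIeq
    rw [habs I hI] at hIeq
    rcases lt_trichotomy I Ic with h | h | h
    · have h' : F I < F Ic := F_lt_F hI hIc01 h
      rw [hIeq, hFIc] at h'
      exact absurd h' (lt_irrefl c)
    · exact h
    · have h' : F Ic < F I := F_lt_F hIc01 hI h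
      rw [hIeq, hFIc] at h'
      exact absurd h' (lt_irrefl c)
  · intro I hI
    have hI01 : I ∈ Set.Ioo (0:ℝ) 1 := ⟨hI.1, lt_trans hI.2 hIc01.2⟩
    rw [habs I hI01, ← hFIc]
    exact F_lt_F hI01 hIc01 hI.2
  · intro I hI
    have hI01 : I ∈ Set.Ioo (0:ℝ) 1 := ⟨lt_trans hIc01.1 hI.1, hI.2⟩
    rw [habs I hI01, ← hFIc]
    exact F_lt_F hIc01 hI01 hI.1
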